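/- arXiv:2502.01416 — 4 statements merged into one kernel-verified Lean document; each statement's English description precedes it below -/
import Mathlib

section
/- Let X be a nonempty finite set, N ≥ 1, p_0 and p_1 probability mass functions on X with full support, and q^ref a process on X^{N+2} with full support. Let s* be the unique minimizer of KL( s(x_0, x_1) || q^ref(x_0, x_1) ) over couplings s ∈ Π(p_0, p_1), where q^ref(x_0, x_1) is the endpoint marginal of q^ref. Then the process q*(x_0, x_in, x_1) := s*(x_0, x_1) · q^ref(x_in | x_0, x_1) is the unique minimizer of KL( q || q^ref ) over q ∈ Π_N(p_0, p_1), and the two minimal KL values coincide. -/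
open Finset

/-- A probability mass function on a finite type. -/
def IsPMF {Z : Type*} [Fintype Z] (p : Z → ℝ) : Prop :=
  (∀ z, 0 ≤ p z) ∧ ∑ z, p z = 1

/-- KL divergence between two pmfs on a finite type (with `0 log 0 := 0`,
which is automatic since `0 * log (0/b) = 0`). -/
noncomputable def KLd {Z : Type*} [Fintype Z] (a b : Z → ℝ) : ℝ :=
  ∑ z, a z * Real.log (a z / b z)

/-- Trajectories with `N` intermediate time steps: indices `0, 1, …, N+1`,
where index `0` is time `0` and index `N+1` is time `1`. -/
abbrev Traj (X : Type*) (N : ℕ) := Fin (N + 2) → X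

variable {X : Type*} [Fintype X] [DecidableEq X] {N : ℕ}

/-- One-time marginal of a process at time index `i`. -/
noncomputable def timeMarg (q : Traj X N → ℝ) (i : Fin (N + 2)) (x : X) : ℝ :=
  ∑ ω : Traj X N, if ω i = x then q ω else 0

/-- Joint marginal of the endpoints `(x_0, x_1)`. -/
noncomputable def endMarg (q : Traj X N → ℝ) (a b : X) : ℝ :=
  ∑ ω : Traj X N, if ω 0 = a ∧ ω (Fin.last (N + 1)) = b then q ω else 0

/-- Joint marginal at the neighboring time indices `n` and `n+1`. -/
noncomputable def pairMarg (q : Traj X N → ℝ) (n : Fin (N + 1)) (y z : X) : ℝ :=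
  ∑ ω : Traj X N, if ω n.castSucc = y ∧ ω n.succ = z then q ω else 0

/-- Transition probability `q(x_{t_n} = z | x_{t_{n-1}} = y)` for the step from
time index `n` to `n+1`. -/
noncomputable def transP (q : Traj X N → ℝ) (n : Fin (N + 1)) (y z : X) : ℝ :=
  pairMarg q n y z / timeMarg q n.castSucc y

/-- Glue endpoints `a`, `b` and inner states `v` into a trajectory. -/
def glue (a : X) (v : Fin N → X) (b : X) : Traj X N :=
  Fin.cons a (Fin.snoc v b)

/-- The bridge `q(x_in | x_0 = a, x_1 = b)`, as a function of the inner states. -/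
noncomputable def bridge (q : Traj X N → ℝ) (a b : X) (v : Fin N → X) : ℝ :=
  q (glue a v b) / endMarg q a b

/-- A process is Markov if it factorizes through its one-step transitions. -/
def IsMarkov (q : Traj X N → ℝ) : Prop :=
  ∀ ω : Traj X N,
    q ω = timeMarg q 0 (ω 0) * ∏ n : Fin (N + 1), transP q n (ω n.castSucc) (ω n.succ)

/-- A process `q` is reciprocal w.r.t. a full-support reference process `qref` if its
bridges coincide with those of `qref` wherever they are defined. -/
def IsReciprocal (qref q : Traj X N → ℝ) : Prop :=
  ∀ a b : X, 0 < endMarg q a b → ∀ v : Fin N → X, bridge q a b v = bridge qref a b v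

/-- Reciprocal projection of `q` w.r.t. `qref`:
`proj_R(q)(x_0, x_in, x_1) = qref(x_in | x_0, x_1) · q(x_0, x_1)`. -/
noncomputable def projR (qref q : Traj X N → ℝ) (ω : Traj X N) : ℝ :=
  (qref ω / endMarg qref (ω 0) (ω (Fin.last (N + 1)))) *
    endMarg q (ω 0) (ω (Fin.last (N + 1)))

/-- Markovian projection of `q`:
`proj_M(q)(x_0, x_in, x_1) = q(x_0) ∏_{n=1}^{N+1} q(x_{t_n} | x_{t_{n-1}})`. -/
noncomputable def projM (q : Traj X N → ℝ) (ω : Traj X N) : ℝ :=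
  timeMarg q 0 (ω 0) * ∏ n : Fin (N + 1), transP q n (ω n.castSucc) (ω n.succ)

/-- Marginal of the bridge of `q` at time index `i`:
`q(x_{t_i} = y | x_0 = a, x_1 = b)`. -/
noncomputable def bridgeAt (q : Traj X N → ℝ) (i : Fin (N + 2)) (y a b : X) : ℝ :=
  (∑ ω : Traj X N, if ω 0 = a ∧ ω i = y ∧ ω (Fin.last (N + 1)) = b then q ω else 0) /
    endMarg q a b

/-- Conditional transition given the terminal point:
`q(x_{t_n} = z | x_{t_{n-1}} = y, x_1 = b)` for the step from time index `n` to `n+1`. -/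
noncomputable def condTrans (q : Traj X N → ℝ) (n : Fin (N + 1)) (y z b : X) : ℝ :=
  (∑ ω : Traj X N,
      if ω n.castSucc = y ∧ ω n.succ = z ∧ ω (Fin.last (N + 1)) = b then q ω else 0) /
    (∑ ω : Traj X N, if ω n.castSucc = y ∧ ω (Fin.last (N + 1)) = b then q ω else 0)

/-- Membership in `Π_N(p_0, p_1)`: a process with prescribed marginals at times 0 and 1. -/
def InPiN (p0 p1 : X → ℝ) (q : Traj X N → ℝ) : Prop :=
  IsPMF q ∧ (∀ x, timeMarg q 0 x = p0 x) ∧ (∀ x, timeMarg q (Fin.last (N + 1)) x = p1 x)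

/-- Membership in `Π(p_0, p_1)`: couplings on `X²` with prescribed marginals. -/
def InPi2 (p0 p1 : X → ℝ) (s : X × X → ℝ) : Prop :=
  IsPMF s ∧ (∀ a, ∑ b, s (a, b) = p0 a) ∧ (∀ b, ∑ a, s (a, b) = p1 b)

section Helpers

variable [Nonempty X]

lemma glue_zero (a : X) (v : Fin N → X) (b : X) : glue a v b 0 = a := rfl

lemma glue_last (a : X) (v : Fin N → X) (b : X) :
    glue a v b (Fin.last (N + 1)) = b := by
  unfold glue
  rw [show (Fin.last (N + 1)) = (Fin.last N).succ by rfl, Fin.cons_succ, Fin.snoc_last]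

lemma endMarg_nonneg {q : Traj X N → ℝ} (hq : ∀ ω, 0 ≤ q ω) (a b : X) :
    0 ≤ endMarg q a b := by
  apply Finset.sum_nonneg
  intro ω _
  split
  · exact hq ω
  · exact le_rfl

lemma endMarg_pos {q : Traj X N → ℝ} (hq : ∀ ω, 0 < q ω) (a b : X) :
    0 < endMarg q a b := by
  classical
  have : 0 < (if (glue a (fun _ : Fin N => a) b) 0 = a ∧
      (glue a (fun _ : Fin N => a) b) (Fin.last (N + 1)) = b then q (glue a (fun _ : Fin N => a) b) else 0) := by
    rw [if_pos ⟨glue_zero a _ b, glue_last a _ b⟩]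
    exact hq _
  refine lt_of_lt_of_le this (Finset.single_le_sum (f := fun ω =>
      if ω 0 = a ∧ ω (Fin.last (N + 1)) = b then q ω else 0) ?_ (Finset.mem_univ _))
  intro ω _
  split
  · exact (hq ω).le
  · exact le_rfl

lemma le_endMarg {q : Traj X N → ℝ} (hq : ∀ ω, 0 ≤ q ω) (ω : Traj X N) :
    q ω ≤ endMarg q (ω 0) (ω (Fin.last (N + 1))) := by
  have : q ω = (if ω 0 = ω 0 ∧ ω (Fin.last (N + 1)) = ω (Fin.last (N + 1))
      then q ω else 0) := by simp
  rw [this]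
  refine Finset.single_le_sum (f := fun ω' =>
      if ω' 0 = ω 0 ∧ ω' (Fin.last (N + 1)) = ω (Fin.last (N + 1)) then q ω' else 0)
      ?_ (Finset.mem_univ ω)
  intro ω' _
  split
  · exact hq ω'
  · exact le_rfl

/-- Summing a function of the endpoints against a process. -/
lemma sum_end (g : Traj X N → ℝ) (F : X → X → ℝ) :
    ∑ ω : Traj X N, g ω * F (ω 0) (ω (Fin.last (N + 1))) =
      ∑ a : X, ∑ b : X, endMarg g a b * F a b := by
  unfold endMarg
  simp_rw [Finset.sum_mul, ite_mul, zero_mul]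
  have swap1 : ∀ f : X → X → Traj X N → ℝ,
      (∑ a : X, ∑ b : X, ∑ ω : Traj X N, f a b ω) =
        ∑ ω : Traj X N, ∑ a : X, ∑ b : X, f a b ω := by
    intro f
    calc (∑ a : X, ∑ b : X, ∑ ω : Traj X N, f a b ω)
        = ∑ a : X, ∑ ω : Traj X N, ∑ b : X, f a b ω :=
          Finset.sum_congr rfl fun a _ => Finset.sum_comm
      _ = ∑ ω : Traj X N, ∑ a : X, ∑ b : X, f a b ω := Finset.sum_comm
  rw [swap1 (fun a b ω => if ω 0 = a ∧ ω (Fin.last (N + 1)) = b then g ω * F a b else 0)]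
  refine Finset.sum_congr rfl fun ω _ => ?_
  simp [ite_and]

lemma sum_endMarg_right (q : Traj X N → ℝ) (a : X) :
    ∑ b : X, endMarg q a b = timeMarg q 0 a := by
  unfold endMarg timeMarg
  rw [Finset.sum_comm]
  refine Finset.sum_congr rfl fun ω _ => ?_
  have : ∀ b : X, (if ω 0 = a ∧ ω (Fin.last (N + 1)) = b then q ω else 0) =
      (if b = ω (Fin.last (N + 1)) then (if ω 0 = a then q ω else 0) else 0) := by
    intro b
    by_cases h2 : ω (Fin.last (N + 1)) = b
    · subst h2; simp
    · rw [if_neg (fun h => h2 h.2), if_neg (fun h => h2 h.symm)]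
  simp_rw [this]
  simp

lemma sum_endMarg_left (q : Traj X N → ℝ) (b : X) :
    ∑ a : X, endMarg q a b = timeMarg q (Fin.last (N + 1)) b := by
  unfold endMarg timeMarg
  rw [Finset.sum_comm]
  refine Finset.sum_congr rfl fun ω _ => ?_
  have : ∀ a : X, (if ω 0 = a ∧ ω (Fin.last (N + 1)) = b then q ω else 0) =
      (if a = ω 0 then (if ω (Fin.last (N + 1)) = b then q ω else 0) else 0) := by
    intro a
    by_cases h1 : ω 0 = a
    · subst h1; simp
    · rw [if_neg (fun h => h1 h.1), if_neg (fun h => h1 h.symm)]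
  simp_rw [this]
  simp

/-- Gibbs' inequality with equality case, on a finite type. -/
lemma gibbs {Z : Type*} [Fintype Z] (a b : Z → ℝ)
    (ha : ∀ z, 0 ≤ a z) (hb : ∀ z, 0 ≤ b z) (hab : ∀ z, b z = 0 → a z = 0)
    (hsum : ∑ z, a z = ∑ z, b z) :
    0 ≤ ∑ z, a z * Real.log (a z / b z) ∧
      (∑ z, a z * Real.log (a z / b z) = 0 → a = b) := by
  have key : ∀ z, a z - b z ≤ a z * Real.log (a z / b z) := by
    intro z
    rcases eq_or_lt_of_le (ha z) with h0 | h0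
    · simp [← h0, hb z]
    · have hbz : 0 < b z := by
        rcases eq_or_lt_of_le (hb z) with h1 | h1
        · exact absurd (hab z h1.symm) (by linarith)
        · exact h1
      have hlog : Real.log (b z / a z) ≤ b z / a z - 1 :=
        Real.log_le_sub_one_of_pos (by positivity)
      have : Real.log (a z / b z) = -Real.log (b z / a z) := by
        rw [← Real.log_inv]
        congr 1
        field_simp
      rw [this]
      have h2 : a z * (1 - b z / a z) = a z - b z := by field_simp
      nlinarith [mul_le_mul_of_nonneg_left hlog (ha z)]
  have hsum0 : ∑ z, (a z - b z) = 0 := by rw [Finset.sum_sub_distrib, hsum]; ring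
  constructor
  · calc (0:ℝ) = ∑ z, (a z - b z) := hsum0.symm
      _ ≤ ∑ z, a z * Real.log (a z / b z) :=
        Finset.sum_le_sum fun z _ => key z
  · intro heq
    have hterm : ∀ z ∈ Finset.univ, a z * Real.log (a z / b z) - (a z - b z) = 0 := by
      apply (Finset.sum_eq_zero_iff_of_nonneg ?_).mp
      · rw [Finset.sum_sub_distrib, heq, hsum0]; ring
      · intro z _
        linarith [key z]
    funext z
    have hz := hterm z (Finset.mem_univ z)
    rcases eq_or_lt_of_le (ha z) with h0 | h0
    · rw [← h0] at hz ⊢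
      simp at hz
      linarith
    · have hbz : 0 < b z := by
        rcases eq_or_lt_of_le (hb z) with h1 | h1
        · exact absurd (hab z h1.symm) (by linarith)
        · exact h1
      by_contra hne
      have hne' : a z / b z ≠ 1 := by
        intro h
        exact hne (by field_simp at h; linarith)
      have hlt : Real.log (b z / a z) < b z / a z - 1 :=
        Real.log_lt_sub_one_of_pos (by positivity) (by
          intro h
          apply hne'
          field_simp at h ⊢
          linarith)
      have hlogeq : Real.log (a z / b z) = -Real.log (b z / a z) := by
        rw [← Real.log_inv]
        congr 1
        field_simp
      rw [hlogeq] at hz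
      have h2 : a z * (1 - b z / a z) = a z - b z := by field_simp
      nlinarith [mul_lt_mul_of_pos_left hlt h0]

end Helpers

/-- Static-to-dynamic SB. If `s*` is the unique minimizer of
`KL(s ‖ q^ref(x_0,x_1))` over couplings `Π(p_0,p_1)`, then
`q*(x_0, x_in, x_1) = s*(x_0,x_1) · q^ref(x_in|x_0,x_1)` is the unique minimizer of
`KL(q ‖ q^ref)` over `Π_N(p_0,p_1)`, and the two minimal KL values coincide. -/
theorem static_to_dynamic_sb
    {X : Type*} [Fintype X] [DecidableEq X] [Nonempty X] {N : ℕ} (hN : 1 ≤ N)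
    (p0 p1 : X → ℝ) (hp0 : IsPMF p0) (hp0pos : ∀ x, 0 < p0 x)
    (hp1 : IsPMF p1) (hp1pos : ∀ x, 0 < p1 x)
    (qref : Traj X N → ℝ) (hqref : IsPMF qref) (hqrefpos : ∀ ω, 0 < qref ω)
    (sstar : X × X → ℝ) (hsstar : InPi2 p0 p1 sstar)
    (hsmin : ∀ s : X × X → ℝ, InPi2 p0 p1 s →
      KLd sstar (fun p : X × X => endMarg qref p.1 p.2) ≤
        KLd s (fun p : X × X => endMarg qref p.1 p.2))
    (hsuniq : ∀ s : X × X → ℝ, InPi2 p0 p1 s →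
      KLd s (fun p : X × X => endMarg qref p.1 p.2) =
        KLd sstar (fun p : X × X => endMarg qref p.1 p.2) → s = sstar)
    (qstar : Traj X N → ℝ)
    (hqstar : ∀ ω : Traj X N, qstar ω =
      sstar (ω 0, ω (Fin.last (N + 1))) *
        (qref ω / endMarg qref (ω 0) (ω (Fin.last (N + 1))))) :
    InPiN p0 p1 qstar ∧
    (∀ q : Traj X N → ℝ, InPiN p0 p1 q → KLd qstar qref ≤ KLd q qref) ∧
    (∀ q : Traj X N → ℝ, InPiN p0 p1 q → KLd q qref = KLd qstar qref → q = qstar) ∧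
    KLd qstar qref = KLd sstar (fun p : X × X => endMarg qref p.1 p.2) := by
  have hEpos : ∀ a b : X, 0 < endMarg qref a b := endMarg_pos hqrefpos
  have hsnn : ∀ p : X × X, 0 ≤ sstar p := hsstar.1.1
  -- endpoint marginal of qstar is sstar
  have hqstarEnd : ∀ a b : X, endMarg qstar a b = sstar (a, b) := by
    intro a b
    unfold endMarg
    have hterm : ∀ ω : Traj X N,
        (if ω 0 = a ∧ ω (Fin.last (N + 1)) = b then qstar ω else 0) =
          (sstar (a, b) / endMarg qref a b) *
            (if ω 0 = a ∧ ω (Fin.last (N + 1)) = b then qref ω else 0) := by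
      intro ω
      by_cases h : ω 0 = a ∧ ω (Fin.last (N + 1)) = b
      · rw [if_pos h, if_pos h, hqstar ω, h.1, h.2]; ring
      · rw [if_neg h, if_neg h, mul_zero]
    simp_rw [hterm, ← Finset.mul_sum]
    exact div_mul_cancel₀ _ (hEpos a b).ne'
  have hqstarnn : ∀ ω, 0 ≤ qstar ω := by
    intro ω
    rw [hqstar ω]
    have := hsnn (ω 0, ω (Fin.last (N + 1)))
    have h1 := (hqrefpos ω).le
    have h2 := (hEpos (ω 0) (ω (Fin.last (N + 1)))).le
    positivity
  -- general decomposition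
  have decomp : ∀ q : Traj X N → ℝ, (∀ ω, 0 ≤ q ω) →
      KLd q qref =
        (∑ ω : Traj X N, q ω * Real.log (q ω /
          (endMarg q (ω 0) (ω (Fin.last (N + 1))) * qref ω /
            endMarg qref (ω 0) (ω (Fin.last (N + 1)))))) +
        KLd (fun p : X × X => endMarg q p.1 p.2)
          (fun p : X × X => endMarg qref p.1 p.2) := by
    intro q hqnn
    have hsplit : ∀ ω : Traj X N, q ω * Real.log (q ω / qref ω) =
        q ω * Real.log (q ω /
          (endMarg q (ω 0) (ω (Fin.last (N + 1))) * qref ω /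
            endMarg qref (ω 0) (ω (Fin.last (N + 1))))) +
        q ω * Real.log (endMarg q (ω 0) (ω (Fin.last (N + 1))) /
            endMarg qref (ω 0) (ω (Fin.last (N + 1)))) := by
      intro ω
      set a := ω 0
      set b := ω (Fin.last (N + 1))
      by_cases hq0 : q ω = 0
      · simp [hq0]
      · have hqpos : 0 < q ω := lt_of_le_of_ne (hqnn ω) (Ne.symm hq0)
        have hE := hEpos a b
        have hqref := hqrefpos ω
        have hrpos : 0 < endMarg q a b := lt_of_lt_of_le hqpos (le_endMarg hqnn ω)
        have harg : q ω / qref ω =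
            (q ω / (endMarg q a b * qref ω / endMarg qref a b)) *
              (endMarg q a b / endMarg qref a b) := by
          field_simp
        rw [harg, Real.log_mul (ne_of_gt (by positivity)) (ne_of_gt (by positivity)),
          mul_add]
      -- end hsplit
    calc KLd q qref = ∑ ω : Traj X N, q ω * Real.log (q ω / qref ω) := rfl
      _ = ∑ ω : Traj X N, (q ω * Real.log (q ω /
            (endMarg q (ω 0) (ω (Fin.last (N + 1))) * qref ω /
              endMarg qref (ω 0) (ω (Fin.last (N + 1))))) +
          q ω * Real.log (endMarg q (ω 0) (ω (Fin.last (N + 1))) /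
              endMarg qref (ω 0) (ω (Fin.last (N + 1))))) :=
        Finset.sum_congr rfl fun ω _ => hsplit ω
      _ = _ := by
        rw [Finset.sum_add_distrib]
        congr 1
        rw [sum_end q (fun a b => Real.log (endMarg q a b / endMarg qref a b))]
        unfold KLd
        rw [Fintype.sum_prod_type]
  -- KLd qstar qref = KLd sstar E
  have hKLstar : KLd qstar qref =
      KLd sstar (fun p : X × X => endMarg qref p.1 p.2) := by
    rw [decomp qstar hqstarnn]
    have h1 : (∑ ω : Traj X N, qstar ω * Real.log (qstar ω /
        (endMarg qstar (ω 0) (ω (Fin.last (N + 1))) * qref ω /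
          endMarg qref (ω 0) (ω (Fin.last (N + 1)))))) = 0 := by
      apply Finset.sum_eq_zero
      intro ω _
      have hden : endMarg qstar (ω 0) (ω (Fin.last (N + 1))) * qref ω /
          endMarg qref (ω 0) (ω (Fin.last (N + 1))) = qstar ω := by
        rw [hqstarEnd, hqstar ω]; ring
      rw [hden]
      by_cases h0 : qstar ω = 0
      · simp [h0]
      · rw [div_self h0, Real.log_one, mul_zero]
    rw [h1, zero_add]
    congr 1
    funext p
    rw [hqstarEnd p.1 p.2]
  -- InPiN qstar
  have hPiN : InPiN p0 p1 qstar := by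
    refine ⟨⟨hqstarnn, ?_⟩, ?_, ?_⟩
    · have : ∑ ω : Traj X N, qstar ω = ∑ ω : Traj X N, qstar ω * 1 := by
        simp
      rw [this, sum_end qstar (fun _ _ => 1)]
      simp_rw [hqstarEnd, mul_one]
      rw [← Fintype.sum_prod_type]
      exact hsstar.1.2
    · intro x
      rw [← sum_endMarg_right]
      simp_rw [hqstarEnd]
      exact hsstar.2.1 x
    · intro x
      rw [← sum_endMarg_left]
      simp_rw [hqstarEnd]
      exact hsstar.2.2 x
  -- main estimate for arbitrary q
  have main : ∀ q : Traj X N → ℝ, InPiN p0 p1 q →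
      KLd qstar qref ≤ KLd q qref ∧
        (KLd q qref = KLd qstar qref → q = qstar) := by
    intro q hq
    obtain ⟨⟨hqnn, hqsum⟩, hq0, hq1⟩ := hq
    set r : X × X → ℝ := fun p => endMarg q p.1 p.2 with hr
    have hrPi : InPi2 p0 p1 r := by
      refine ⟨⟨fun p => endMarg_nonneg hqnn p.1 p.2, ?_⟩, ?_, ?_⟩
      · rw [Fintype.sum_prod_type]
        have : ∀ a : X, ∑ b : X, r (a, b) = p0 a := by
          intro a
          rw [show (∑ b : X, r (a, b)) = ∑ b : X, endMarg q a b from rfl,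
            sum_endMarg_right]
          exact hq0 a
        simp_rw [this]
        exact hp0.2
      · intro a
        rw [show (∑ b : X, r (a, b)) = ∑ b : X, endMarg q a b from rfl,
          sum_endMarg_right]
        exact hq0 a
      · intro b
        rw [show (∑ a : X, r (a, b)) = ∑ a : X, endMarg q a b from rfl,
          sum_endMarg_left]
        exact hq1 b
    set q2 : Traj X N → ℝ := fun ω =>
      endMarg q (ω 0) (ω (Fin.last (N + 1))) * qref ω /
        endMarg qref (ω 0) (ω (Fin.last (N + 1))) with hq2
    have hq2nn : ∀ ω, 0 ≤ q2 ω := by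
      intro ω
      have h1 := endMarg_nonneg hqnn (ω 0) (ω (Fin.last (N + 1)))
      have h2 := (hqrefpos ω).le
      have h3 := (hEpos (ω 0) (ω (Fin.last (N + 1)))).le
      positivity
    have hq2ab : ∀ ω, q2 ω = 0 → q ω = 0 := by
      intro ω h
      have hE := hEpos (ω 0) (ω (Fin.last (N + 1)))
      have hqref := hqrefpos ω
      have hr0 : endMarg q (ω 0) (ω (Fin.last (N + 1))) = 0 := by
        by_contra hc
        have : q2 ω ≠ 0 := by
          simp only [hq2]
          positivity
        exact this h
      have := le_endMarg hqnn ω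
      rw [hr0] at this
      linarith [hqnn ω]
    have hq2sum : ∑ ω : Traj X N, q ω = ∑ ω : Traj X N, q2 ω := by
      rw [hqsum]
      have : ∀ ω : Traj X N, q2 ω = qref ω *
          (endMarg q (ω 0) (ω (Fin.last (N + 1))) /
            endMarg qref (ω 0) (ω (Fin.last (N + 1)))) := by
        intro ω; simp only [hq2]; ring
      simp_rw [this]
      rw [sum_end qref (fun a b => endMarg q a b / endMarg qref a b)]
      have : ∀ a b : X, endMarg qref a b * (endMarg q a b / endMarg qref a b) =
          endMarg q a b := by
        intro a b
        rw [mul_div_cancel₀ _ (hEpos a b).ne']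
      simp_rw [this, sum_endMarg_right, hq0]
      exact hp0.2.symm
    have hgibbs := gibbs q q2 hqnn hq2nn hq2ab hq2sum
    have hrKL : KLd sstar (fun p : X × X => endMarg qref p.1 p.2) ≤
        KLd r (fun p : X × X => endMarg qref p.1 p.2) := hsmin r hrPi
    have hdec := decomp q hqnn
    have hD1 : (∑ ω : Traj X N, q ω * Real.log (q ω /
        (endMarg q (ω 0) (ω (Fin.last (N + 1))) * qref ω /
          endMarg qref (ω 0) (ω (Fin.last (N + 1)))))) =
        ∑ ω : Traj X N, q ω * Real.log (q ω / q2 ω) := rfl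
    rw [hD1] at hdec
    constructor
    · rw [hKLstar, hdec]
      have := hgibbs.1
      linarith
    · intro heq
      rw [hdec, hKLstar] at heq
      have h1 : (∑ ω : Traj X N, q ω * Real.log (q ω / q2 ω)) = 0 ∧
          KLd r (fun p : X × X => endMarg qref p.1 p.2) =
            KLd sstar (fun p : X × X => endMarg qref p.1 p.2) := by
        constructor <;> linarith [hgibbs.1]
      have hreq : r = sstar := hsuniq r hrPi h1.2
      have hq_eq : q = q2 := hgibbs.2 h1.1
      funext ω
      rw [hq_eq]
      have : endMarg q (ω 0) (ω (Fin.last (N + 1))) =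
          sstar (ω 0, ω (Fin.last (N + 1))) := by
        have := congrFun hreq (ω 0, ω (Fin.last (N + 1)))
        exact this
      simp only [hq2]
      rw [this, hqstar ω]
      ring
  exact ⟨hPiN, fun q hq => (main q hq).1, fun q hq => (main q hq).2, hKLstar⟩
end

section
/- Let X be a nonempty finite set, N ≥ 1, and let q be a process on X^{N+2} with full support. Set m := proj_M(q), the Markovian projection of q. Then: (i) m is a Markov process; (ii) m has the same one-time marginals as q, i.e. m(x_{t_n}) = q(x_{t_n}) for every n ∈ {0, 1, …, N+1}; and (iii) m has the same joint distributions at neighboring time moments as q, i.e. m(x_{t_{n-1}}, x_{t_n}) = q(x_{t_{n-1}}, x_{t_n}) for every n ∈ {1, …, N+1}. -/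
open Finset

variable {X : Type*} [Fintype X] [DecidableEq X] {N : ℕ}

namespace MPAux
variable {X : Type*} [Fintype X] [DecidableEq X] {N : ℕ}


noncomputable def Fwd (f : X → ℝ) (K : ℕ → X → X → ℝ) : ℕ → X → ℝ
  | 0 => f
  | k+1 => fun x => ∑ y, Fwd f K k y * K k y x

omit [DecidableEq X] in
lemma sum_snoc {k : ℕ} (g : (Fin (k+2) → X) → ℝ) :
    ∑ σ : Fin (k+2) → X, g σ = ∑ τ : Fin (k+1) → X, ∑ x : X, g (Fin.snoc τ x) := by
  rw [← (Fin.snocEquiv (fun _ => X)).sum_comp g]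
  rw [Fintype.sum_prod_type, Finset.sum_comm]
  rfl

omit [DecidableEq X] in
lemma chain_sum (f : X → ℝ) (K : ℕ → X → X → ℝ) (k : ℕ) (h : X → ℝ) :
    ∑ σ : Fin (k+1) → X,
      (f (σ 0) * ∏ n : Fin k, K n (σ n.castSucc) (σ n.succ)) * h (σ (Fin.last k))
    = ∑ x, Fwd f K k x * h x := by
  induction k generalizing h with
  | zero =>
    rw [← (Equiv.funUnique (Fin 1) X).symm.sum_comp]
    simp [Fwd, Equiv.funUnique]
  | succ k ih =>
    rw [sum_snoc]
    have step : ∀ (τ : Fin (k+1) → X) (x : X),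
        (f ((Fin.snoc τ x : Fin (k+2) → X) 0) *
          ∏ n : Fin (k+1), K n ((Fin.snoc τ x : Fin (k+2) → X) n.castSucc)
            ((Fin.snoc τ x : Fin (k+2) → X) n.succ)) *
          h ((Fin.snoc τ x : Fin (k+2) → X) (Fin.last (k+1)))
        = (f (τ 0) * ∏ n : Fin k, K n (τ n.castSucc) (τ n.succ)) *
            (K k (τ (Fin.last k)) x * h x) := by
      intro τ x
      rw [Fin.prod_univ_castSucc]
      have h0 : (Fin.snoc τ x : Fin (k+2) → X) 0 = τ 0 := by
        have : (0 : Fin (k+2)) = Fin.castSucc 0 := rfl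
        rw [this, Fin.snoc_castSucc]
      have hlast : (Fin.snoc τ x : Fin (k+2) → X) (Fin.last (k+1)) = x := Fin.snoc_last _ _
      have hmid : ∀ n : Fin k,
          K ↑(Fin.castSucc n) ((Fin.snoc τ x : Fin (k+2) → X) n.castSucc.castSucc)
            ((Fin.snoc τ x : Fin (k+2) → X) n.castSucc.succ)
          = K n (τ n.castSucc) (τ n.succ) := by
        intro n
        rw [Fin.snoc_castSucc, Fin.succ_castSucc, Fin.snoc_castSucc]
        rfl
      have hlaststep :
          K ↑(Fin.last k) ((Fin.snoc τ x : Fin (k+2) → X) (Fin.last k).castSucc)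
            ((Fin.snoc τ x : Fin (k+2) → X) (Fin.last k).succ)
          = K k (τ (Fin.last k)) x := by
        rw [Fin.snoc_castSucc, Fin.succ_last, Fin.snoc_last]
        rfl
      rw [h0, hlast, Finset.prod_congr rfl (fun n _ => hmid n), hlaststep]
      ring
    simp_rw [step]
    have := ih (fun y => ∑ x, K k y x * h x)
    simp_rw [← Finset.mul_sum] at *
    rw [this]
    simp_rw [Fwd, Finset.sum_mul, Finset.mul_sum]
    rw [Finset.sum_comm]
    congr 1; ext x; congr 1; ext y; ring

omit [DecidableEq X] in
lemma chain_sum' (f : X → ℝ) (K : ℕ → X → X → ℝ) (h : X → ℝ) :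
    ∑ σ : Traj X N,
      (f (σ 0) * ∏ n : Fin (N+1), K ↑n (σ n.castSucc) (σ n.succ)) * h (σ (Fin.last (N+1)))
    = ∑ x, Fwd f K (N+1) x * h x := chain_sum f K (N+1) h

omit [DecidableEq X] in
lemma fwd_congr_below (f1 f2 : X → ℝ) (K1 K2 : ℕ → X → X → ℝ) (hf : f1 = f2)
    (j : ℕ) (hK : ∀ r, r < j → K1 r = K2 r) : Fwd f1 K1 j = Fwd f2 K2 j := by
  induction j with
  | zero => exact hf
  | succ j ih =>
    funext x
    show ∑ y, Fwd f1 K1 j y * K1 j y x = ∑ y, Fwd f2 K2 j y * K2 j y x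
    rw [ih (fun r hr => hK r (by omega)), hK j (by omega)]

omit [DecidableEq X] in
lemma fwd_total_succ (f : X → ℝ) (K : ℕ → X → X → ℝ) (r : ℕ)
    (hK : ∀ y, ∑ z, K r y z = 1) :
    ∑ w, Fwd f K (r+1) w = ∑ w, Fwd f K r w := by
  show ∑ w, ∑ y, Fwd f K r y * K r y w = _
  rw [Finset.sum_comm]
  refine Finset.sum_congr rfl fun y _ => ?_
  rw [← Finset.mul_sum, hK, mul_one]

omit [DecidableEq X] in
lemma fwd_total_ge (f : X → ℝ) (K : ℕ → X → X → ℝ) (a b : ℕ)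
    (hK : ∀ r y, a ≤ r → r < b → ∑ z, K r y z = 1) :
    ∀ d, a + d ≤ b → ∑ w, Fwd f K (a+d) w = ∑ w, Fwd f K a w := by
  intro d
  induction d with
  | zero => intro _; rfl
  | succ d ih =>
    intro hd
    have : a + (d+1) = (a+d)+1 := by omega
    rw [this, fwd_total_succ f K (a+d) (fun y => hK _ y (by omega) (by omega)),
      ih (by omega)]

section Q
variable (q : Traj X N → ℝ) (hqpos : ∀ ω, 0 < q ω)
include hqpos

lemma timeMarg_pos (i : Fin (N+2)) (x : X) : 0 < timeMarg q i x := by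
  apply Finset.sum_pos' (fun ω _ => by by_cases h : ω i = x <;> simp [h, (hqpos ω).le])
  exact ⟨(fun _ => x), Finset.mem_univ _, by simpa using hqpos _⟩

omit hqpos in
lemma sum_pair_right (n : Fin (N+1)) (y : X) :
    ∑ z, pairMarg q n y z = timeMarg q n.castSucc y := by
  unfold pairMarg timeMarg
  rw [Finset.sum_comm]
  refine Finset.sum_congr rfl fun ω _ => ?_
  by_cases h : ω n.castSucc = y <;> simp [h]

omit hqpos in
lemma sum_pair_left (n : Fin (N+1)) (z : X) :
    ∑ y, pairMarg q n y z = timeMarg q n.succ z := by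
  unfold pairMarg timeMarg
  rw [Finset.sum_comm]
  refine Finset.sum_congr rfl fun ω _ => ?_
  by_cases h : ω n.succ = z <;> simp [h]

lemma transP_sum (n : Fin (N+1)) (y : X) : ∑ z, transP q n y z = 1 := by
  unfold transP
  rw [← Finset.sum_div, sum_pair_right, div_self (timeMarg_pos q hqpos _ _).ne']

lemma time_mul_trans (n : Fin (N+1)) (y z : X) :
    timeMarg q n.castSucc y * transP q n y z = pairMarg q n y z := by
  unfold transP
  rw [mul_div_assoc', mul_comm, mul_div_assoc, div_self (timeMarg_pos q hqpos _ _).ne',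
    mul_one]

/-- The canonical kernel of `q`, reindexed by `ℕ`. -/
noncomputable def Kq : ℕ → X → X → ℝ :=
  fun r => if h : r < N+1 then transP q ⟨r, h⟩ else fun _ _ => 0

omit hqpos in
lemma Kq_fin (n : Fin (N+1)) : Kq q ↑n = transP q n := by
  simp [Kq, n.isLt]

omit hqpos in
lemma projM_eq_chain (ω : Traj X N) :
    projM q ω = timeMarg q 0 (ω 0) *
      ∏ n : Fin (N+1), Kq q ↑n (ω n.castSucc) (ω n.succ) := by
  unfold projM
  congr 1
  exact Finset.prod_congr rfl fun n _ => by rw [Kq_fin]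

lemma Kq_stoch (r : ℕ) (hr : r < N+1) (y : X) : ∑ z, Kq q r y z = 1 := by
  simp only [Kq, dif_pos hr]
  exact transP_sum q hqpos _ _

lemma Fwd_eq_timeMarg : ∀ (r : ℕ) (h : r < N+2),
    Fwd (timeMarg q 0) (Kq q) r = timeMarg q ⟨r, h⟩ := by
  intro r
  induction r with
  | zero => intro h; congr 1
  | succ r ih =>
    intro h
    have hr : r < N+1 := by omega
    funext x
    show ∑ y, Fwd (timeMarg q 0) (Kq q) r y * Kq q r y x = _
    rw [ih (by omega)]
    have hc : (⟨r, hr⟩ : Fin (N+1)).castSucc = (⟨r, by omega⟩ : Fin (N+2)) := rfl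
    calc ∑ y, timeMarg q ⟨r, by omega⟩ y * Kq q r y x
        = ∑ y, pairMarg q ⟨r, hr⟩ y x := by
          refine Finset.sum_congr rfl fun y _ => ?_
          rw [show Kq q r = transP q ⟨r, hr⟩ from by simp [Kq, hr], ← hc,
            time_mul_trans q hqpos]
      _ = timeMarg q ⟨r+1, h⟩ x := by
          rw [sum_pair_left]
          rfl

end Q
end MPAux
open Finset
namespace MPAux
variable {X : Type*} [Fintype X] [DecidableEq X] {N : ℕ}
variable (q : Traj X N → ℝ) (hqpos : ∀ ω, 0 < q ω)
include hqpos

lemma timeMarg_projM (i : Fin (N+2)) (x : X) :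
    timeMarg (projM q) i x = timeMarg q i x := by
  obtain ⟨j, hj⟩ := i
  set f := timeMarg q 0 with hf
  match j with
  | 0 =>
    have hi0 : (⟨0, hj⟩ : Fin (N+2)) = 0 := rfl
    rw [hi0]
    set f' : X → ℝ := fun a => if a = x then f a else 0 with hf'
    have key : timeMarg (projM q) 0 x
        = ∑ σ : Traj X N, (f' (σ 0) * ∏ n : Fin (N+1),
            Kq q ↑n (σ n.castSucc) (σ n.succ)) * (fun _ => (1:ℝ)) (σ (Fin.last (N+1))) := by
      unfold timeMarg
      refine Finset.sum_congr rfl fun ω _ => ?_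
      rw [projM_eq_chain, mul_one, hf']
      by_cases h : ω 0 = x <;> simp [h, hf]
    rw [key]
    refine (chain_sum' (N := N) f' (Kq q) (fun _ => (1:ℝ))).trans ?_
    simp only [mul_one]
    have tot := fwd_total_ge f' (Kq q) 0 (N+1)
      (fun r y _ hr => Kq_stoch q hqpos r hr y) (N+1) (by omega)
    simp only [Nat.zero_add] at tot
    rw [tot]
    show ∑ w, f' w = _
    simp [hf', hf]
  | (s+1) =>
    have hs : s < N+1 := by omega
    set K' : ℕ → X → X → ℝ :=
      fun r => if r = s then (fun u w => if w = x then Kq q r u w else 0) else Kq q r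
      with hK'
    have key : timeMarg (projM q) ⟨s+1, hj⟩ x
        = ∑ σ : Traj X N, (f (σ 0) * ∏ n : Fin (N+1),
            K' ↑n (σ n.castSucc) (σ n.succ)) * (fun _ => (1:ℝ)) (σ (Fin.last (N+1))) := by
      unfold timeMarg
      refine Finset.sum_congr rfl fun ω _ => ?_
      simp only [mul_one]
      rw [projM_eq_chain]
      have hprod : ∏ n : Fin (N+1), K' ↑n (ω n.castSucc) (ω n.succ)
          = if ω ⟨s+1, hj⟩ = x then ∏ n : Fin (N+1), Kq q ↑n (ω n.castSucc) (ω n.succ)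
            else 0 := by
        by_cases hx : ω ⟨s+1, hj⟩ = x
        · rw [if_pos hx]
          refine Finset.prod_congr rfl fun n _ => ?_
          by_cases hns : (n : ℕ) = s
          · have hn : n = ⟨s, hs⟩ := Fin.ext hns
            subst hn
            have : (⟨s, hs⟩ : Fin (N+1)).succ = (⟨s+1, hj⟩ : Fin (N+2)) := rfl
            simp only [hK', if_pos hns]
            rw [this, if_pos hx]
          · simp only [hK', if_neg hns]
        · rw [if_neg hx]
          apply Finset.prod_eq_zero (Finset.mem_univ (⟨s, hs⟩ : Fin (N+1)))
          have : (⟨s, hs⟩ : Fin (N+1)).succ = (⟨s+1, hj⟩ : Fin (N+2)) := rfl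
          simp only [hK', if_pos rfl]
          rw [this, if_neg hx]
      rw [hprod]
      by_cases hx : ω ⟨s+1, hj⟩ = x <;> simp [hx, hf]
    rw [key]
    refine (chain_sum' (N := N) f K' (fun _ => (1:ℝ))).trans ?_
    simp only [mul_one]
    have tot := fwd_total_ge f K' (s+1) (N+1)
      (fun r y hr hr' => by
        rw [hK']
        simp only [if_neg (by omega : ¬ r = s)]
        exact Kq_stoch q hqpos r hr' y) (N-s) (by omega)
    rw [show s+1+(N-s) = N+1 by omega] at tot
    rw [tot]
    have hbelow : Fwd f K' s = Fwd f (Kq q) s :=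
      fwd_congr_below f f K' (Kq q) rfl s
        (fun r hr => by rw [hK']; simp only [if_neg (by omega : ¬ r = s)])
    have hstep : ∀ w, Fwd f K' (s+1) w
        = if w = x then Fwd f (Kq q) (s+1) w else 0 := by
      intro w
      show ∑ y, Fwd f K' s y * K' s y w = _
      rw [hbelow]
      simp only [hK', if_pos rfl]
      by_cases hw : w = x
      · simp only [if_pos hw]
        rfl
      · simp [hw]
    simp_rw [hstep]
    rw [Finset.sum_ite_eq' Finset.univ x, if_pos (Finset.mem_univ x)]
    rw [Fwd_eq_timeMarg q hqpos (s+1) hj]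

lemma pairMarg_projM (n : Fin (N+1)) (y z : X) :
    pairMarg (projM q) n y z = pairMarg q n y z := by
  set f := timeMarg q 0 with hf
  obtain ⟨s, hs⟩ := n
  have hj : s + 1 < N + 2 := by omega
  set K' : ℕ → X → X → ℝ :=
    fun r => if r = s then (fun u w => if u = y ∧ w = z then Kq q r u w else 0)
      else Kq q r with hK'
  have key : pairMarg (projM q) ⟨s, hs⟩ y z
      = ∑ σ : Traj X N, (f (σ 0) * ∏ n : Fin (N+1),
          K' ↑n (σ n.castSucc) (σ n.succ)) * (fun _ => (1:ℝ)) (σ (Fin.last (N+1))) := by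
    unfold pairMarg
    refine Finset.sum_congr rfl fun ω _ => ?_
    simp only [mul_one]
    rw [projM_eq_chain]
    have hprod : ∏ m : Fin (N+1), K' ↑m (ω m.castSucc) (ω m.succ)
        = if ω (⟨s, hs⟩ : Fin (N+1)).castSucc = y ∧ ω (⟨s, hs⟩ : Fin (N+1)).succ = z
          then ∏ m : Fin (N+1), Kq q ↑m (ω m.castSucc) (ω m.succ) else 0 := by
      by_cases hx : ω (⟨s, hs⟩ : Fin (N+1)).castSucc = y ∧ ω (⟨s, hs⟩ : Fin (N+1)).succ = z
      · rw [if_pos hx]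
        refine Finset.prod_congr rfl fun m _ => ?_
        by_cases hms : (m : ℕ) = s
        · have hm : m = ⟨s, hs⟩ := Fin.ext hms
          subst hm
          simp only [hK', if_pos hms]
          rw [if_pos hx]
        · simp only [hK', if_neg hms]
      · rw [if_neg hx]
        apply Finset.prod_eq_zero (Finset.mem_univ (⟨s, hs⟩ : Fin (N+1)))
        simp only [hK', if_pos rfl]
        rw [if_neg hx]
    rw [hprod]
    by_cases hx : ω (⟨s, hs⟩ : Fin (N+1)).castSucc = y ∧ ω (⟨s, hs⟩ : Fin (N+1)).succ = z <;>
      simp [hx, hf]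
  rw [key]
  refine (chain_sum' (N := N) f K' (fun _ => (1:ℝ))).trans ?_
  simp only [mul_one]
  have tot := fwd_total_ge f K' (s+1) (N+1)
    (fun r u hr hr' => by
      rw [hK']
      simp only [if_neg (by omega : ¬ r = s)]
      exact Kq_stoch q hqpos r hr' u) (N-s) (by omega)
  rw [show s+1+(N-s) = N+1 by omega] at tot
  rw [tot]
  have hbelow : Fwd f K' s = Fwd f (Kq q) s :=
    fwd_congr_below f f K' (Kq q) rfl s
      (fun r hr => by rw [hK']; simp only [if_neg (by omega : ¬ r = s)])
  have hstep : ∀ w, Fwd f K' (s+1) w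
      = if w = z then Fwd f (Kq q) s y * Kq q s y w else 0 := by
    intro w
    show ∑ u, Fwd f K' s u * K' s u w = _
    rw [hbelow]
    simp only [hK', if_pos rfl]
    by_cases hw : w = z
    · subst hw
      rw [if_pos rfl]
      simp only [and_true, mul_ite, mul_zero]
      rw [Finset.sum_ite_eq' Finset.univ y, if_pos (Finset.mem_univ y)]
    · simp [hw]
  simp_rw [hstep]
  rw [Finset.sum_ite_eq' Finset.univ z, if_pos (Finset.mem_univ z)]
  rw [Fwd_eq_timeMarg q hqpos s (by omega)]
  rw [show Kq q s = transP q ⟨s, hs⟩ from by simp [Kq, hs]]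
  have hc : (⟨s, hs⟩ : Fin (N+1)).castSucc = (⟨s, by omega⟩ : Fin (N+2)) := rfl
  rw [← hc, time_mul_trans q hqpos]

end MPAux

/-- Properties of the Markovian projection. For a full-support process
`q`, the Markovian projection `m = proj_M(q)`: (i) is Markov; (ii) has the same one-time
marginals as `q`; (iii) has the same joint distributions at neighboring time moments. -/
theorem markov_proj_properties
    {X : Type*} [Fintype X] [DecidableEq X] [Nonempty X] {N : ℕ} (hN : 1 ≤ N)
    (q : Traj X N → ℝ) (hq : IsPMF q) (hqpos : ∀ ω, 0 < q ω) :
    IsMarkov (projM q) ∧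
    (∀ (i : Fin (N + 2)) (x : X), timeMarg (projM q) i x = timeMarg q i x) ∧
    (∀ (n : Fin (N + 1)) (y z : X), pairMarg (projM q) n y z = pairMarg q n y z) := by
  have h2 := MPAux.timeMarg_projM q hqpos
  have h3 := MPAux.pairMarg_projM q hqpos
  refine ⟨?_, h2, h3⟩
  intro ω
  show projM q ω = timeMarg (projM q) 0 (ω 0) *
    ∏ n : Fin (N+1), transP (projM q) n (ω n.castSucc) (ω n.succ)
  have htrans : ∀ (n : Fin (N+1)) (y z : X), transP (projM q) n y z = transP q n y z := by
    intro n y z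
    unfold transP
    rw [h2, h3]
  rw [h2, Finset.prod_congr rfl fun n _ => htrans n (ω n.castSucc) (ω n.succ)]
  rfl
end

section
/- Let X be a nonempty finite set, N ≥ 1, let q^ref be a Markov process on X^{N+2} with full support, and let q be a process on X^{N+2} that is reciprocal with respect to q^ref. Then for every n ∈ {1, …, N+1} and all states y, z ∈ X, the joint distribution of q at the neighboring times t_{n-1} and t_n satisfies q(x_{t_{n-1}} = y, x_{t_n} = z) = Σ_{x_0, x_1 ∈ X} q(x_0, x_1) · q^ref(x_{t_{n-1}} = y | x_0, x_1) · q^ref(x_{t_n} = z | x_{t_{n-1}} = y, x_1) (with the conventions x_{t_0} := x_0 and x_{t_{N+1}} := x_1, under which the corresponding conditionals are point masses). -/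
open Finset

variable {X : Type*} [Fintype X] [DecidableEq X] {N : ℕ}

section Aux
variable {X : Type*} [Fintype X] [DecidableEq X] {N : ℕ}

/-- Splice two trajectories at index `m`: follow `u` up to `m`, then `v`. -/
def splice (m : Fin (N + 2)) (u v : Traj X N) : Traj X N :=
  fun i => if i ≤ m then u i else v i

omit [Fintype X] [DecidableEq X] in
lemma splice_apply_le (m : Fin (N + 2)) (u v : Traj X N) {i : Fin (N + 2)} (h : i ≤ m) :
    splice m u v i = u i := if_pos h

omit [Fintype X] [DecidableEq X] in
lemma splice_apply_gt (m : Fin (N + 2)) (u v : Traj X N) {i : Fin (N + 2)} (h : ¬ i ≤ m) :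
    splice m u v i = v i := if_neg h

omit [Fintype X] [DecidableEq X] in
lemma splice_splice (m : Fin (N + 2)) (u v : Traj X N) :
    splice m (splice m u v) (splice m v u) = u := by
  funext i; by_cases h : i ≤ m <;> simp [splice, h]

lemma splice_mul (qref : Traj X N → ℝ) (hM : IsMarkov qref) (m : Fin (N + 2))
    (u v : Traj X N) (h : u m = v m) :
    qref (splice m u v) * qref (splice m v u) = qref u * qref v := by
  have key : ∀ (u v : Traj X N), u m = v m → ∀ k : Fin (N + 1),
      transP qref k ((splice m u v) k.castSucc) ((splice m u v) k.succ) =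
        if (k.succ : Fin (N + 2)) ≤ m then transP qref k (u k.castSucc) (u k.succ)
        else transP qref k (v k.castSucc) (v k.succ) := by
    intro u v h k
    by_cases hk : (k.succ : Fin (N + 2)) ≤ m
    · have h1 : (k.castSucc : Fin (N + 2)) ≤ m :=
        le_trans (le_of_lt Fin.castSucc_lt_succ) hk
      rw [if_pos hk, splice_apply_le m u v h1, splice_apply_le m u v hk]
    · rw [if_neg hk, splice_apply_gt m u v hk]
      by_cases h1 : (k.castSucc : Fin (N + 2)) ≤ m
      · have hceq : (k.castSucc : Fin (N + 2)) = m := by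
          have hk' : ¬ ((k.succ : Fin (N + 2)).val ≤ m.val) := hk
          have h1' : (k.castSucc : Fin (N + 2)).val ≤ m.val := h1
          apply Fin.ext
          simp only [Fin.val_succ, Fin.coe_castSucc] at hk' h1' ⊢
          omega
        rw [splice_apply_le m u v h1, hceq, h]
      · rw [splice_apply_gt m u v h1]
  rw [hM (splice m u v), hM (splice m v u), hM u, hM v]
  have h0 : ((0 : Fin (N + 2)) ≤ m) := Fin.zero_le m
  rw [splice_apply_le m u v h0, splice_apply_le m v u h0]
  have hprod :
      (∏ k : Fin (N + 1), transP qref k ((splice m u v) k.castSucc) ((splice m u v) k.succ)) *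
        (∏ k : Fin (N + 1), transP qref k ((splice m v u) k.castSucc) ((splice m v u) k.succ)) =
      (∏ k : Fin (N + 1), transP qref k (u k.castSucc) (u k.succ)) *
        (∏ k : Fin (N + 1), transP qref k (v k.castSucc) (v k.succ)) := by
    rw [← Finset.prod_mul_distrib, ← Finset.prod_mul_distrib]
    refine Finset.prod_congr rfl fun k _ => ?_
    rw [key u v h k, key v u h.symm k]
    by_cases hk : (k.succ : Fin (N + 2)) ≤ m
    · rw [if_pos hk, if_pos hk]
    · rw [if_neg hk, if_neg hk]; ring
  calc timeMarg qref 0 (u 0) *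
        (∏ k : Fin (N + 1), transP qref k ((splice m u v) k.castSucc) ((splice m u v) k.succ)) *
        (timeMarg qref 0 (v 0) *
          (∏ k : Fin (N + 1), transP qref k ((splice m v u) k.castSucc) ((splice m v u) k.succ)))
      = timeMarg qref 0 (u 0) * timeMarg qref 0 (v 0) *
        ((∏ k : Fin (N + 1), transP qref k ((splice m u v) k.castSucc) ((splice m u v) k.succ)) *
          (∏ k : Fin (N + 1), transP qref k ((splice m v u) k.castSucc) ((splice m v u) k.succ))) := by
        ring
    _ = timeMarg qref 0 (u 0) * timeMarg qref 0 (v 0) *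
        ((∏ k : Fin (N + 1), transP qref k (u k.castSucc) (u k.succ)) *
          (∏ k : Fin (N + 1), transP qref k (v k.castSucc) (v k.succ))) := by rw [hprod]
    _ = _ := by ring

omit [DecidableEq X] in
lemma sum_ite_mul_sum_ite (qref : Traj X N → ℝ) (P Q : Traj X N → Prop)
    [DecidablePred P] [DecidablePred Q] :
    (∑ ω : Traj X N, if P ω then qref ω else 0) * (∑ ω : Traj X N, if Q ω then qref ω else 0)
      = ∑ p : Traj X N × Traj X N, if P p.1 ∧ Q p.2 then qref p.1 * qref p.2 else 0 := by
  rw [Fintype.sum_prod_type, Finset.sum_mul_sum]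
  refine Finset.sum_congr rfl fun u _ => Finset.sum_congr rfl fun v _ => ?_
  by_cases hP : P u <;> by_cases hQ : Q v <;> simp [hP, hQ]

lemma markov_swap (qref : Traj X N → ℝ) (hM : IsMarkov qref) (n : Fin (N + 1))
    (a y z b : X) :
    (∑ ω : Traj X N, if ω 0 = a ∧ (ω n.castSucc = y ∧ ω n.succ = z) ∧
        ω (Fin.last (N + 1)) = b then qref ω else 0) *
      (∑ ω : Traj X N, if ω n.castSucc = y ∧ ω (Fin.last (N + 1)) = b then qref ω else 0) =
    (∑ ω : Traj X N, if ω 0 = a ∧ ω n.castSucc = y ∧ ω (Fin.last (N + 1)) = b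
        then qref ω else 0) *
      (∑ ω : Traj X N, if ω n.castSucc = y ∧ ω n.succ = z ∧ ω (Fin.last (N + 1)) = b
        then qref ω else 0) := by
  classical
  have h0 : ((0 : Fin (N + 2)) ≤ (n.castSucc : Fin (N + 2))) := Fin.zero_le _
  have hmm : ((n.castSucc : Fin (N + 2)) ≤ n.castSucc) := le_refl _
  have hm1 : ¬ ((n.succ : Fin (N + 2)) ≤ n.castSucc) := by
    simp [Fin.le_def]
  have hmL : ¬ ((Fin.last (N + 1) : Fin (N + 2)) ≤ (n.castSucc : Fin (N + 2))) :=
    not_le.mpr (Fin.castSucc_lt_last n)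
  rw [sum_ite_mul_sum_ite, sum_ite_mul_sum_ite]
  set m : Fin (N + 2) := n.castSucc with hmdef
  have hinv : Function.Involutive
      (fun p : Traj X N × Traj X N => (splice m p.1 p.2, splice m p.2 p.1)) := by
    intro p
    simp only [splice_splice]
  refine Fintype.sum_bijective _ hinv.bijective _ _ fun p => ?_
  obtain ⟨u, v⟩ := p
  simp only [splice_apply_le m u v h0, splice_apply_le m u v hmm,
    splice_apply_gt m u v hm1, splice_apply_gt m u v hmL,
    splice_apply_le m v u h0, splice_apply_le m v u hmm,
    splice_apply_gt m v u hm1, splice_apply_gt m v u hmL]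
  have hiff : (u 0 = a ∧ (u m = y ∧ u n.succ = z) ∧ u (Fin.last (N + 1)) = b) ∧
      (v m = y ∧ v (Fin.last (N + 1)) = b) ↔
      ((u 0 = a ∧ u m = y ∧ v (Fin.last (N + 1)) = b) ∧
        (v m = y ∧ u n.succ = z ∧ u (Fin.last (N + 1)) = b)) := by tauto
  rw [if_congr hiff rfl rfl]
  split_ifs with hc
  · exact (splice_mul qref hM m u v (hc.1.2.1.trans hc.2.1.symm)).symm
  · rfl

omit [Fintype X] [DecidableEq X] in
lemma glue_inner (ω : Traj X N) :
    glue (ω 0) (fun i => ω (i.succ.castSucc)) (ω (Fin.last (N + 1))) = ω := by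
  funext i
  refine Fin.cases ?_ (fun j => ?_) i
  · simp [glue]
  · simp only [glue, Fin.cons_succ]
    refine Fin.lastCases ?_ (fun k => ?_) j
    · rw [Fin.snoc_last, Fin.succ_last]
    · rw [Fin.snoc_castSucc, Fin.succ_castSucc]

end Aux

/-- Neighboring-time joint of a reciprocal process. For a process `q`
reciprocal w.r.t. the full-support Markov reference `q^ref`, for every transition
`n ∈ {1, …, N+1}` and states `y, z`,
`q(x_{t_{n-1}} = y, x_{t_n} = z) = Σ_{x_0,x_1} q(x_0,x_1) · q^ref(x_{t_{n-1}} = y|x_0,x_1)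
  · q^ref(x_{t_n} = z|x_{t_{n-1}} = y, x_1)` (with the conventions `x_{t_0} := x_0`,
`x_{t_{N+1}} := x_1`, under which the corresponding conditionals are point masses). -/
theorem reciprocal_pair_marginal
    {X : Type*} [Fintype X] [DecidableEq X] [Nonempty X] {N : ℕ} (hN : 1 ≤ N)
    (qref : Traj X N → ℝ) (hqref : IsPMF qref) (hqrefpos : ∀ ω, 0 < qref ω)
    (hqrefM : IsMarkov qref)
    (q : Traj X N → ℝ) (hq : IsPMF q) (hqR : IsReciprocal qref q) :
    ∀ (n : Fin (N + 1)) (y z : X),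
      pairMarg q n y z =
        ∑ a : X, ∑ b : X, endMarg q a b *
          (bridgeAt qref n.castSucc y a b * condTrans qref n y z b) := by
  classical
  intro n y z
  have hqnn : ∀ ω, 0 ≤ q ω := hq.1
  have hL0 : Fin.last (N + 1) ≠ (0 : Fin (N + 2)) := Fin.last_pos.ne'
  have hmneL : (n.castSucc : Fin (N + 2)) ≠ Fin.last (N + 1) :=
    Fin.ne_of_lt (Fin.castSucc_lt_last n)
  have hpos : ∀ (P : Traj X N → Prop) [DecidablePred P] (ω₀ : Traj X N), P ω₀ →
      0 < ∑ ω : Traj X N, if P ω then qref ω else 0 := by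
    intro P _ ω₀ h₀
    refine Finset.sum_pos' (fun ω _ => ?_) ⟨ω₀, Finset.mem_univ _, ?_⟩
    · split
      · exact le_of_lt (hqrefpos ω)
      · exact le_refl 0
    · simpa [h₀] using hqrefpos ω₀
  have hEref : ∀ a b : X, 0 < endMarg qref a b := by
    intro a b
    exact hpos (fun ω => ω 0 = a ∧ ω (Fin.last (N + 1)) = b)
      (fun i => if i = 0 then a else b) ⟨by simp, by simp [hL0]⟩
  have hDpos : ∀ b : X, 0 <
      ∑ ω : Traj X N, if ω n.castSucc = y ∧ ω (Fin.last (N + 1)) = b then qref ω else 0 := by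
    intro b
    exact hpos (fun ω => ω n.castSucc = y ∧ ω (Fin.last (N + 1)) = b)
      (fun i => if i = Fin.last (N + 1) then b else y) ⟨by simp [hmneL], by simp⟩
  have hEqnn : ∀ a b : X, 0 ≤ endMarg q a b := by
    intro a b
    refine Finset.sum_nonneg fun ω _ => ?_
    split
    · exact hqnn ω
    · exact le_refl 0
  have hsplit : pairMarg q n y z = ∑ a : X, ∑ b : X, ∑ ω : Traj X N,
      if ω 0 = a ∧ (ω n.castSucc = y ∧ ω n.succ = z) ∧ ω (Fin.last (N + 1)) = b
      then q ω else 0 := by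
    have inner : ∀ ω : Traj X N, (if ω n.castSucc = y ∧ ω n.succ = z then q ω else 0)
        = ∑ a : X, ∑ b : X,
          if ω 0 = a ∧ (ω n.castSucc = y ∧ ω n.succ = z) ∧ ω (Fin.last (N + 1)) = b
          then q ω else 0 := by
      intro ω
      by_cases hC : ω n.castSucc = y ∧ ω n.succ = z
      · simp [hC, ite_and]
      · simp [hC]
    rw [pairMarg]
    simp_rw [inner]
    rw [Finset.sum_comm]
    refine Finset.sum_congr rfl fun a _ => ?_
    rw [Finset.sum_comm]
  rw [hsplit]
  refine Finset.sum_congr rfl fun a _ => Finset.sum_congr rfl fun b _ => ?_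
  by_cases h0 : endMarg q a b = 0
  · have hz : ∀ ω : Traj X N, ω 0 = a → ω (Fin.last (N + 1)) = b → q ω = 0 := by
      intro ω h0a hLb
      have h1 : q ω ≤ endMarg q a b := by
        have := Finset.single_le_sum
          (f := fun ω' : Traj X N =>
            if ω' 0 = a ∧ ω' (Fin.last (N + 1)) = b then q ω' else 0)
          (fun ω' _ => by
            by_cases h : ω' 0 = a ∧ ω' (Fin.last (N + 1)) = b <;> simp [h, hqnn ω'])
          (Finset.mem_univ ω)
        simpa [endMarg, h0a, hLb] using this
      have h2 := hqnn ω
      linarith [h0 ▸ h1]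
    rw [h0, zero_mul]
    refine Finset.sum_eq_zero fun ω _ => ?_
    split_ifs with hc
    · exact hz ω hc.1 hc.2.2
    · rfl
  · have hq0 : 0 < endMarg q a b := lt_of_le_of_ne (hEqnn a b) (Ne.symm h0)
    have hkey : ∀ ω : Traj X N, ω 0 = a → ω (Fin.last (N + 1)) = b →
        q ω = qref ω * (endMarg q a b / endMarg qref a b) := by
      intro ω h0a hLb
      have hb := hqR a b hq0 (fun i => ω (i.succ.castSucc))
      have hg : glue a (fun i => ω (i.succ.castSucc)) b = ω := by
        rw [← h0a, ← hLb]; exact glue_inner ω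
      rw [bridge, bridge, hg] at hb
      have hE := hEref a b
      field_simp at hb
      field_simp
      linarith [hb]
    have hS : (∑ ω : Traj X N,
        if ω 0 = a ∧ (ω n.castSucc = y ∧ ω n.succ = z) ∧ ω (Fin.last (N + 1)) = b
        then q ω else 0)
        = (∑ ω : Traj X N,
          if ω 0 = a ∧ (ω n.castSucc = y ∧ ω n.succ = z) ∧ ω (Fin.last (N + 1)) = b
          then qref ω else 0) * (endMarg q a b / endMarg qref a b) := by
      rw [Finset.sum_mul]
      refine Finset.sum_congr rfl fun ω _ => ?_
      split_ifs with hc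
      · exact hkey ω hc.1 hc.2.2
      · simp
    rw [hS, bridgeAt, condTrans]
    have hswap := markov_swap qref hqrefM n a y z b
    have hD := hDpos b
    have hE := hEref a b
    rw [div_mul_div_comm, ← hswap, mul_div_mul_right _ _ hD.ne']
    ring
end

section
/- Let X be a nonempty finite set, let p_0 and p_1 be probability mass functions on X with full support, and let q^ref be a probability mass function on X² with full support. Then the static Schrödinger Bridge problem min_{q ∈ Π(p_0, p_1)} KL( q || q^ref ) has a solution, and this solution is unique. -/
open Finset

variable {X : Type*} [Fintype X] [DecidableEq X] {N : ℕ}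

private lemma sb_term_eq (b x : ℝ) (hb : 0 < b) :
    x * Real.log (x / b) = x * Real.log x - Real.log b * x := by
  rcases eq_or_ne x 0 with rfl | hx
  · simp
  · rw [Real.log_div hx hb.ne']; ring

private lemma sb_KLd_eq {Z : Type*} [Fintype Z] (a b : Z → ℝ) (hb : ∀ z, 0 < b z) :
    KLd a b = ∑ z, (a z * Real.log (a z) - Real.log (b z) * a z) :=
  Finset.sum_congr rfl fun z _ => sb_term_eq _ _ (hb z)

private lemma sb_strict_mid (x y : ℝ) (hx : 0 ≤ x) (hy : 0 ≤ y) (hxy : x ≠ y) :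
    ((x + y)/2) * Real.log ((x+y)/2) < (x * Real.log x + y * Real.log y)/2 := by
  have h := Real.strictConvexOn_mul_log.2 hx hy hxy (by norm_num : (0:ℝ) < 1/2)
    (by norm_num : (0:ℝ) < 1/2) (by norm_num)
  simp only [smul_eq_mul] at h
  have h2 : (x+y)/2 = 1/2*x+1/2*y := by ring
  rw [h2]; linarith

/-- Existence and uniqueness of the static Schrödinger Bridge. For
full-support pmfs `p_0, p_1` on `X` and a full-support reference pmf `q^ref` on `X²`,
the problem `min_{q ∈ Π(p_0,p_1)} KL(q ‖ q^ref)` has a unique solution. -/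
theorem static_sb_exists_unique
    {X : Type*} [Fintype X] [DecidableEq X] [Nonempty X]
    (p0 p1 : X → ℝ) (hp0 : IsPMF p0) (hp0pos : ∀ x, 0 < p0 x)
    (hp1 : IsPMF p1) (hp1pos : ∀ x, 0 < p1 x)
    (qref : X × X → ℝ) (hqref : IsPMF qref) (hqrefpos : ∀ p : X × X, 0 < qref p) :
    ∃! q : X × X → ℝ, InPi2 p0 p1 q ∧
      ∀ q' : X × X → ℝ, InPi2 p0 p1 q' → KLd q qref ≤ KLd q' qref := by
  classical
  set S : Set (X × X → ℝ) := {q | InPi2 p0 p1 q} with hSdef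
  -- continuity of KL
  have hcont : Continuous fun q : X × X → ℝ => KLd q qref := by
    have heq : (fun q : X × X → ℝ => KLd q qref)
        = fun q => ∑ z, (q z * Real.log (q z) - Real.log (qref z) * q z) :=
      funext fun q => sb_KLd_eq q qref hqrefpos
    rw [heq]
    exact continuous_finset_sum _ fun z _ =>
      (Real.continuous_mul_log.comp (continuous_apply z)).sub
        (continuous_const.mul (continuous_apply z))
  -- S is nonempty
  have hne : S.Nonempty := by
    refine ⟨fun z => p0 z.1 * p1 z.2, ⟨⟨fun z => mul_nonneg (hp0.1 _) (hp1.1 _), ?_⟩, ?_, ?_⟩⟩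
    · rw [Fintype.sum_prod_type]
      simp only [← Finset.mul_sum, hp1.2, mul_one]
      exact hp0.2
    · intro a
      show ∑ b, p0 a * p1 b = p0 a
      rw [← Finset.mul_sum, hp1.2, mul_one]
    · intro b
      show ∑ a, p0 a * p1 b = p1 b
      rw [← Finset.sum_mul, hp0.2, one_mul]
  -- S is closed
  have hclosed : IsClosed S := by
    have h1 : IsClosed {q : X × X → ℝ | ∀ z, 0 ≤ q z} := by
      rw [Set.setOf_forall]
      exact isClosed_iInter fun z => isClosed_le continuous_const (continuous_apply z)
    have h2 : IsClosed {q : X × X → ℝ | ∑ z, q z = 1} :=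
      isClosed_eq (continuous_finset_sum _ fun z _ => continuous_apply z) continuous_const
    have h3 : IsClosed {q : X × X → ℝ | ∀ a, ∑ b, q (a, b) = p0 a} := by
      rw [Set.setOf_forall]
      exact isClosed_iInter fun a => isClosed_eq
        (continuous_finset_sum _ fun b _ => continuous_apply (a, b)) continuous_const
    have h4 : IsClosed {q : X × X → ℝ | ∀ b, ∑ a, q (a, b) = p1 b} := by
      rw [Set.setOf_forall]
      exact isClosed_iInter fun b => isClosed_eq
        (continuous_finset_sum _ fun a _ => continuous_apply (a, b)) continuous_const
    have hSeq : S = ({q : X × X → ℝ | ∀ z, 0 ≤ q z} ∩ {q | ∑ z, q z = 1})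
        ∩ ({q | ∀ a, ∑ b, q (a, b) = p0 a} ∩ {q | ∀ b, ∑ a, q (a, b) = p1 b}) := by
      ext q
      constructor
      · rintro ⟨⟨ha, hb⟩, hc, hd⟩; exact ⟨⟨ha, hb⟩, hc, hd⟩
      · rintro ⟨⟨ha, hb⟩, hc, hd⟩; exact ⟨⟨ha, hb⟩, hc, hd⟩
    rw [hSeq]
    exact (h1.inter h2).inter (h3.inter h4)
  -- S is contained in a compact box
  have hsub : S ⊆ Set.pi Set.univ fun _ : X × X => Set.Icc (0 : ℝ) 1 := by
    rintro q ⟨⟨hq0, hq1⟩, -, -⟩ z _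
    refine ⟨hq0 z, ?_⟩
    calc q z ≤ ∑ w, q w := Finset.single_le_sum (fun w _ => hq0 w) (Finset.mem_univ z)
      _ = 1 := hq1
  have hcpt : IsCompact S :=
    (isCompact_univ_pi fun _ => isCompact_Icc).of_isClosed_subset hclosed hsub
  obtain ⟨q, hqS, hqmin⟩ := hcpt.exists_isMinOn hne hcont.continuousOn
  have hqmin' : ∀ r ∈ S, KLd q qref ≤ KLd r qref := fun r hr => hqmin hr
  refine ⟨q, ⟨hqS, fun q' hq' => hqmin' q' hq'⟩, ?_⟩
  rintro q' ⟨hq'S, hq'min⟩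
  by_contra hne'
  have hdiff : ∃ z, q' z ≠ q z := by
    by_contra h
    push_neg at h
    exact hne' (funext h)
  have hval : KLd q' qref = KLd q qref :=
    le_antisymm (hq'min q hqS) (hqmin' q' hq'S)
  -- midpoint
  set r : X × X → ℝ := fun z => (q' z + q z) / 2 with hrdef
  have hq0 : ∀ z, 0 ≤ q z := hqS.1.1
  have hq'0 : ∀ z, 0 ≤ q' z := hq'S.1.1
  have hrS : r ∈ S := by
    obtain ⟨⟨h0, h1⟩, ha, hb⟩ := hqS
    obtain ⟨⟨h0', h1'⟩, ha', hb'⟩ := hq'S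
    refine ⟨⟨fun z => div_nonneg (add_nonneg (h0' z) (h0 z)) two_pos.le, ?_⟩, ?_, ?_⟩
    · simp only [hrdef, ← Finset.sum_div, Finset.sum_add_distrib, h1, h1']
      norm_num
    · intro a
      simp only [hrdef, ← Finset.sum_div, Finset.sum_add_distrib, ha a, ha' a]
      ring
    · intro b
      simp only [hrdef, ← Finset.sum_div, Finset.sum_add_distrib, hb b, hb' b]
      ring
  have key : KLd r qref < (KLd q' qref + KLd q qref) / 2 := by
    rw [sb_KLd_eq r _ hqrefpos, sb_KLd_eq q _ hqrefpos, sb_KLd_eq q' _ hqrefpos,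
      ← Finset.sum_add_distrib, Finset.sum_div]
    apply Finset.sum_lt_sum
    · intro z _
      rcases eq_or_ne (q' z) (q z) with h | h
      · apply le_of_eq
        simp only [hrdef, h]
        rw [show (q z + q z) / 2 = q z from by ring]
        ring
      · have := sb_strict_mid (q' z) (q z) (hq'0 z) (hq0 z) h
        simp only [hrdef]
        linarith
    · obtain ⟨z, hz⟩ := hdiff
      refine ⟨z, Finset.mem_univ z, ?_⟩
      have := sb_strict_mid (q' z) (q z) (hq'0 z) (hq0 z) hz
      simp only [hrdef]
      linarith
  rw [hval] at key
  have hle : KLd q qref ≤ KLd r qref := hqmin' r hrS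
  linarith
end
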